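/- Let N ≥ 1, ρ > 0, D ≥ 0, and for each i = 1,…,N let Jᵢ : ℝⁿ → ℝ be differentiable with Lᵢ-Lipschitz gradient, and let x̃ᵢ, x̃ᵢ⁺, λᵢ, x₀⁺ ∈ ℝⁿ satisfy ‖∇Jᵢ(x̃ᵢ) + λᵢ‖ ≤ D and ‖∇Jᵢ(x̃ᵢ⁺) + λᵢ + ρ(x̃ᵢ⁺ − x₀⁺)‖ ≤ D, and define λᵢ⁺ := λᵢ + ρ(x̃ᵢ⁺ − x₀⁺). Then Σᵢ₌₁ᴺ ⟨λᵢ⁺ − λᵢ, x̃ᵢ⁺ − x₀⁺⟩ = Σᵢ₌₁ᴺ (1/ρ)‖λᵢ⁺ − λᵢ‖² ≤ Σᵢ₌₁ᴺ (2Lᵢ²/ρ)‖x̃ᵢ⁺ − x̃ᵢ‖² + 8ND²/ρ. In particular, for the augmented Lagrangian L({xᵢ}, x₀, {λᵢ}) = h(x₀) + Σᵢ Jᵢ(xᵢ) + Σᵢ ⟨λᵢ, xᵢ − x₀⟩ + Σᵢ (ρ/2)‖xᵢ − x₀‖² (for any h : ℝⁿ → ℝ), one has L({x̃ᵢ⁺},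 x₀⁺, {λᵢ⁺}) − L({x̃ᵢ⁺}, x₀⁺, {λᵢ}) ≤ Σᵢ₌₁ᴺ (2Lᵢ²/ρ)‖x̃ᵢ⁺ − x̃ᵢ‖² + 8ND²/ρ. -/

import Mathlib

open RealInnerProductSpace Finset

/-- The augmented Lagrangian
`L({xᵢ}, x₀, {λᵢ}) = h(x₀) + Σᵢ Jᵢ(xᵢ) + Σᵢ ⟨λᵢ, xᵢ − x₀⟩ + Σᵢ (ρ/2)‖xᵢ − x₀‖²`. -/
noncomputable def augLag {n N : ℕ} (h : EuclideanSpace ℝ (Fin n) → ℝ)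
    (J : Fin N → EuclideanSpace ℝ (Fin n) → ℝ) (ρ : ℝ)
    (x : Fin N → EuclideanSpace ℝ (Fin n)) (x0 : EuclideanSpace ℝ (Fin n))
    (lam : Fin N → EuclideanSpace ℝ (Fin n)) : ℝ :=
  h x0 + (∑ i, J i (x i)) + (∑ i, ⟪lam i, x i - x0⟫) + ∑ i, ρ / 2 * ‖x i - x0‖ ^ 2

/-- estimate (19) in the proof of the paper's Lemma 2: bound on the
increase of the augmented Lagrangian caused by the dual update. -/
theorem dual_update_increase_bound {n N : ℕ} (hN : 1 ≤ N) (ρ : ℝ) (hρ : 0 < ρ)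
    (D : ℝ) (hD : 0 ≤ D)
    (h : EuclideanSpace ℝ (Fin n) → ℝ)
    (J : Fin N → EuclideanSpace ℝ (Fin n) → ℝ)
    (hJ : ∀ i, Differentiable ℝ (J i))
    (Li : Fin N → ℝ)
    (hLip : ∀ i, ∀ a b : EuclideanSpace ℝ (Fin n),
      ‖gradient (J i) a - gradient (J i) b‖ ≤ Li i * ‖a - b‖)
    (x xp lam : Fin N → EuclideanSpace ℝ (Fin n))
    (x0p : EuclideanSpace ℝ (Fin n))
    (h1 : ∀ i, ‖gradient (J i) (x i) + lam i‖ ≤ D)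
    (h2 : ∀ i, ‖gradient (J i) (xp i) + lam i + ρ • (xp i - x0p)‖ ≤ D)
    (lamp : Fin N → EuclideanSpace ℝ (Fin n))
    (hlamp : ∀ i, lamp i = lam i + ρ • (xp i - x0p)) :
    ((∑ i, ⟪lamp i - lam i, xp i - x0p⟫) = ∑ i, (1 / ρ) * ‖lamp i - lam i‖ ^ 2) ∧
    ((∑ i, (1 / ρ) * ‖lamp i - lam i‖ ^ 2) ≤
      (∑ i, (2 * (Li i) ^ 2 / ρ) * ‖xp i - x i‖ ^ 2) + 8 * N * D ^ 2 / ρ) ∧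
    (augLag h J ρ xp x0p lamp - augLag h J ρ xp x0p lam ≤
      (∑ i, (2 * (Li i) ^ 2 / ρ) * ‖xp i - x i‖ ^ 2) + 8 * N * D ^ 2 / ρ) := by
  have hdiff : ∀ i, lamp i - lam i = ρ • (xp i - x0p) := by
    intro i; rw [hlamp i]; abel
  have part1 : (∑ i, ⟪lamp i - lam i, xp i - x0p⟫) = ∑ i, (1 / ρ) * ‖lamp i - lam i‖ ^ 2 := by
    refine Finset.sum_congr rfl fun i _ => ?_
    rw [hdiff i, real_inner_smul_left, real_inner_self_eq_norm_sq, norm_smul]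
    rw [Real.norm_eq_abs, abs_of_pos hρ]
    field_simp
  have key : ∀ i, (1 / ρ) * ‖lamp i - lam i‖ ^ 2 ≤
      (2 * (Li i) ^ 2 / ρ) * ‖xp i - x i‖ ^ 2 + 8 * D ^ 2 / ρ := by
    intro i
    have hb : ‖lamp i - lam i‖ ≤ Li i * ‖xp i - x i‖ + 2 * D := by
      have heq : lamp i - lam i =
          (gradient (J i) (xp i) + lam i + ρ • (xp i - x0p))
          - (gradient (J i) (x i) + lam i)
          - (gradient (J i) (xp i) - gradient (J i) (x i)) := by
        rw [hdiff i]; abel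
      rw [heq]
      calc ‖_ - _ - _‖ ≤ ‖(gradient (J i) (xp i) + lam i + ρ • (xp i - x0p))
          - (gradient (J i) (x i) + lam i)‖ + ‖gradient (J i) (xp i) - gradient (J i) (x i)‖ :=
            norm_sub_le _ _
        _ ≤ (‖gradient (J i) (xp i) + lam i + ρ • (xp i - x0p)‖ +
            ‖gradient (J i) (x i) + lam i‖) + Li i * ‖xp i - x i‖ :=
            add_le_add (norm_sub_le _ _) (hLip i _ _)
        _ ≤ (D + D) + Li i * ‖xp i - x i‖ := by
            have := h1 i; have := h2 i; linarith
        _ = Li i * ‖xp i - x i‖ + 2 * D := by ring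
    have hnn : (0:ℝ) ≤ ‖lamp i - lam i‖ := norm_nonneg _
    have hsq : ‖lamp i - lam i‖ ^ 2 ≤ 2 * (Li i) ^ 2 * ‖xp i - x i‖ ^ 2 + 8 * D ^ 2 := by
      nlinarith [sq_nonneg (Li i * ‖xp i - x i‖ - 2 * D)]
    have h1ρ : (0:ℝ) < 1 / ρ := by positivity
    calc (1 / ρ) * ‖lamp i - lam i‖ ^ 2
        ≤ (1 / ρ) * (2 * (Li i) ^ 2 * ‖xp i - x i‖ ^ 2 + 8 * D ^ 2) := by
          exact mul_le_mul_of_nonneg_left hsq (le_of_lt h1ρ)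
      _ = (2 * (Li i) ^ 2 / ρ) * ‖xp i - x i‖ ^ 2 + 8 * D ^ 2 / ρ := by
          field_simp
  have part2 : (∑ i, (1 / ρ) * ‖lamp i - lam i‖ ^ 2) ≤
      (∑ i, (2 * (Li i) ^ 2 / ρ) * ‖xp i - x i‖ ^ 2) + 8 * N * D ^ 2 / ρ := by
    calc (∑ i, (1 / ρ) * ‖lamp i - lam i‖ ^ 2)
        ≤ ∑ i, ((2 * (Li i) ^ 2 / ρ) * ‖xp i - x i‖ ^ 2 + 8 * D ^ 2 / ρ) :=
          Finset.sum_le_sum fun i _ => key i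
      _ = (∑ i, (2 * (Li i) ^ 2 / ρ) * ‖xp i - x i‖ ^ 2) + 8 * N * D ^ 2 / ρ := by
          rw [Finset.sum_add_distrib, Finset.sum_const, card_univ, Fintype.card_fin]
          push_cast
          ring
  refine ⟨part1, part2, ?_⟩
  have hL : augLag h J ρ xp x0p lamp - augLag h J ρ xp x0p lam =
      ∑ i, ⟪lamp i - lam i, xp i - x0p⟫ := by
    simp only [augLag, inner_sub_left]
    rw [Finset.sum_sub_distrib]
    ring
  rw [hL, part1]
  exact part2
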